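/- (Matrix Jensen inequality for the inverse, used in the proof of the Bayesian Cramér–Rao bound.) Let (Ω, μ) be a probability space and let G : Ω → (k×k real symmetric matrices) be measurable, with G(ω) positive definite for μ-a.e. ω. Assume G and ω ↦ G(ω)^{-1} are both Bochner integrable and that ∫_Ω G dμ is invertible. Then ∫_Ω G(ω)^{-1} dμ(ω) ⪰ ( ∫_Ω G(ω) dμ(ω) )^{-1}, where ⪰ denotes the positive semidefinite (Loewner) order. -/

import Mathlib

open MeasureTheory
open scoped Matrix

lemma quad_sum' {k : ℕ} (M : Matrix (Fin k) (Fin k) ℝ) (v : Fin k → ℝ) :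
    v ⬝ᵥ M *ᵥ v = ∑ i, ∑ j, v i * (M i j * v j) := by
  simp [dotProduct, Matrix.mulVec, Finset.mul_sum]

lemma quad_integrable' {k : ℕ} {Ω : Type*} [MeasurableSpace Ω] (μ : Measure Ω)
    (F : Ω → Matrix (Fin k) (Fin k) ℝ)
    (hint : ∀ i j, Integrable (fun ω => F ω i j) μ) (v : Fin k → ℝ) :
    Integrable (fun ω => v ⬝ᵥ F ω *ᵥ v) μ := by
  simp only [quad_sum']
  refine integrable_finset_sum _ fun i _ => integrable_finset_sum _ fun j _ => ?_
  exact ((hint i j).mul_const _).const_mul _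

lemma quad_int' {k : ℕ} {Ω : Type*} [MeasurableSpace Ω] (μ : Measure Ω)
    (F : Ω → Matrix (Fin k) (Fin k) ℝ)
    (hint : ∀ i j, Integrable (fun ω => F ω i j) μ) (v : Fin k → ℝ) :
    ∫ ω, v ⬝ᵥ F ω *ᵥ v ∂μ = v ⬝ᵥ (Matrix.of fun i j => ∫ ω, F ω i j ∂μ) *ᵥ v := by
  simp only [quad_sum']
  rw [integral_finset_sum _ (fun i _ =>
    integrable_finset_sum _ fun j _ => ((hint i j).mul_const _).const_mul _)]
  refine Finset.sum_congr rfl fun i _ => ?_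
  rw [integral_finset_sum _ (fun j _ => ((hint i j).mul_const _).const_mul _)]
  refine Finset.sum_congr rfl fun j _ => ?_
  rw [integral_const_mul, integral_mul_const]
  simp

/-- matrix Jensen inequality for the inverse: if `G` is an a.e. positive
definite symmetric-matrix-valued map on a probability space, integrable entrywise together
with its pointwise inverse, and the mean of `G` is invertible, then
`∫ G⁻¹ dμ ⪰ (∫ G dμ)⁻¹` in the Loewner order. -/
theorem stmt_10 {k : ℕ} {Ω : Type*} [MeasurableSpace Ω]
    (μ : Measure Ω) [IsProbabilityMeasure μ]
    (G : Ω → Matrix (Fin k) (Fin k) ℝ)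
    (hsymm : ∀ ω, (G ω).IsSymm)
    (hmeas : ∀ i j, Measurable fun ω => G ω i j)
    (hpd : ∀ᵐ ω ∂μ, (G ω).PosDef)
    (hint : ∀ i j, Integrable (fun ω => G ω i j) μ)
    (hintinv : ∀ i j, Integrable (fun ω => (G ω)⁻¹ i j) μ)
    (hinv : IsUnit (Matrix.of fun i j => ∫ ω, G ω i j ∂μ).det) :
    ((Matrix.of fun i j => ∫ ω, (G ω)⁻¹ i j ∂μ)
      - (Matrix.of fun i j => ∫ ω, G ω i j ∂μ)⁻¹).PosSemidef := by
  set M : Matrix (Fin k) (Fin k) ℝ := Matrix.of fun i j => ∫ ω, G ω i j ∂μ with hMdef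
  set A : Matrix (Fin k) (Fin k) ℝ := M⁻¹ with hAdef
  set N : Matrix (Fin k) (Fin k) ℝ := Matrix.of fun i j => ∫ ω, (G ω)⁻¹ i j ∂μ with hNdef
  -- pointwise symmetry of inverses
  have hinvsymm : ∀ ω, ((G ω)⁻¹)ᵀ = (G ω)⁻¹ := fun ω => by
    rw [Matrix.transpose_nonsing_inv, (hsymm ω).eq]
  have hMsymm : Mᵀ = M := by
    ext i j
    simp only [Matrix.transpose_apply, hMdef, Matrix.of_apply]
    exact congrArg _ (funext fun ω => congrFun (congrFun (hsymm ω).eq i) j)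
  have hAsymm : Aᵀ = A := by
    rw [hAdef, Matrix.transpose_nonsing_inv, hMsymm]
  have hNsymm : Nᵀ = N := by
    ext i j
    simp only [Matrix.transpose_apply, hNdef, Matrix.of_apply]
    exact congrArg _ (funext fun ω => congrFun (congrFun (hinvsymm ω) i) j)
  refine Matrix.PosSemidef.of_dotProduct_mulVec_nonneg ?_ ?_
  · show ((N - A)ᴴ = N - A)
    rw [Matrix.conjTranspose_eq_transpose_of_trivial, Matrix.transpose_sub, hNsymm, hAsymm]
  intro x
  rw [star_trivial]
  -- quadratic forms
  have key : ∀ᵐ ω ∂μ,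
      0 ≤ x ⬝ᵥ (G ω)⁻¹ *ᵥ x + x ⬝ᵥ (A * G ω * A) *ᵥ x - 2 * (x ⬝ᵥ A *ᵥ x) := by
    filter_upwards [hpd] with ω hω
    have hdet : IsUnit (G ω).det := isUnit_iff_ne_zero.mpr hω.det_pos.ne'
    have e1 : G ω * (G ω)⁻¹ = 1 := Matrix.mul_nonsing_inv _ hdet
    have e2 : (G ω)⁻¹ * G ω = 1 := Matrix.nonsing_inv_mul _ hdet
    have hid : (A - (G ω)⁻¹)ᴴ * G ω * (A - (G ω)⁻¹)
        = (G ω)⁻¹ + A * G ω * A - (A + A) := by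
      rw [Matrix.conjTranspose_eq_transpose_of_trivial, Matrix.transpose_sub, hAsymm,
        hinvsymm ω]
      have expand : (A - (G ω)⁻¹) * G ω * (A - (G ω)⁻¹)
          = A * G ω * A - A * (G ω * (G ω)⁻¹) - ((G ω)⁻¹ * G ω) * A
            + ((G ω)⁻¹ * G ω) * (G ω)⁻¹ := by noncomm_ring
      rw [expand, e1, e2, Matrix.mul_one, Matrix.one_mul, Matrix.one_mul]
      abel
    have hps := (hω.posSemidef).conjTranspose_mul_mul_same (A - (G ω)⁻¹)
    have h0 := hps.dotProduct_mulVec_nonneg x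
    rw [star_trivial, hid] at h0
    calc (0:ℝ) ≤ x ⬝ᵥ ((G ω)⁻¹ + A * G ω * A - (A + A)) *ᵥ x := h0
    _ = x ⬝ᵥ (G ω)⁻¹ *ᵥ x + x ⬝ᵥ (A * G ω * A) *ᵥ x - 2 * (x ⬝ᵥ A *ᵥ x) := by
        simp [Matrix.add_mulVec, Matrix.sub_mulVec, dotProduct_add,
          dotProduct_sub]
        ring
  -- integrability of the pieces
  have int1 : Integrable (fun ω => x ⬝ᵥ (G ω)⁻¹ *ᵥ x) μ :=
    quad_integrable' μ _ hintinv x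
  -- rewrite the middle quadratic form through the vector y = A *ᵥ x
  have hmid : ∀ ω, x ⬝ᵥ (A * G ω * A) *ᵥ x = (A *ᵥ x) ⬝ᵥ G ω *ᵥ (A *ᵥ x) := by
    intro ω
    rw [← Matrix.mulVec_mulVec, ← Matrix.mulVec_mulVec, Matrix.dotProduct_mulVec x A,
      ← Matrix.mulVec_transpose, hAsymm]
  have int2 : Integrable (fun ω => x ⬝ᵥ (A * G ω * A) *ᵥ x) μ := by
    simp only [hmid]
    exact quad_integrable' μ _ hint (A *ᵥ x)
  have hconst : Integrable (fun _ : Ω => 2 * (x ⬝ᵥ A *ᵥ x)) μ := integrable_const _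
  have hge : 0 ≤ ∫ ω, (x ⬝ᵥ (G ω)⁻¹ *ᵥ x + x ⬝ᵥ (A * G ω * A) *ᵥ x
      - 2 * (x ⬝ᵥ A *ᵥ x)) ∂μ := integral_nonneg_of_ae key
  have int12 : Integrable (fun ω => x ⬝ᵥ (G ω)⁻¹ *ᵥ x + x ⬝ᵥ (A * G ω * A) *ᵥ x) μ :=
    int1.add int2
  rw [integral_sub int12 hconst, integral_add int1 int2, integral_const,
    probReal_univ, one_smul] at hge
  have hI1 : ∫ ω, x ⬝ᵥ (G ω)⁻¹ *ᵥ x ∂μ = x ⬝ᵥ N *ᵥ x := quad_int' μ _ hintinv x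
  have hI2 : ∫ ω, x ⬝ᵥ (A * G ω * A) *ᵥ x ∂μ = x ⬝ᵥ A *ᵥ x := by
    simp only [hmid]
    rw [quad_int' μ _ hint (A *ᵥ x), ← hMdef]
    have : (A *ᵥ x) ⬝ᵥ M *ᵥ (A *ᵥ x) = x ⬝ᵥ (A * M * A) *ᵥ x := by
      rw [← Matrix.mulVec_mulVec, ← Matrix.mulVec_mulVec, Matrix.dotProduct_mulVec x A,
        ← Matrix.mulVec_transpose, hAsymm]
    rw [this, hAdef, Matrix.nonsing_inv_mul M hinv, Matrix.one_mul]
  rw [hI1, hI2] at hge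
  have : x ⬝ᵥ (N - A) *ᵥ x = x ⬝ᵥ N *ᵥ x - x ⬝ᵥ A *ᵥ x := by
    rw [Matrix.sub_mulVec, dotProduct_sub]
  rw [this]
  linarith
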